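/- arXiv:1808.09813 — 3 statements merged into one kernel-verified Lean document; each statement's English description precedes it below -/
import Mathlib

section
/- Let k ∈ ℂ with |k| > 1, δ₀ > 0, t > 1, and set δ = tδ₀/(|k| − 1). Let (c_n)_{n≥0} be a complex sequence with |c_{n+1} − k c_n| ≤ δ₀ for all n. If |c_0 − 1/k^m| ≥ δ for every integer m ≥ 1, then |c_n − 1/k^m| ≥ δ for every n ∈ ℕ and every integer m ≥ 1; that is, the whole sequence stays outside the union 𝒟 = ⋃_{m≥1} {w : |w − 1/k^m| < δ}. -/
/-- If the initial point of an approximate orbit of the dilation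
`w ↦ kw` (`|k| > 1`) avoids all disks of radius `δ = tδ₀/(|k| - 1)` around the
backward orbit `1/k^m` (`m ≥ 1`) of the point `1`, then the whole approximate
orbit avoids them. -/
theorem avoided_region_of_dilation
    (k : ℂ) (hk : 1 < ‖k‖)
    (δ₀ : ℝ) (hδ₀ : 0 < δ₀) (t : ℝ) (ht : 1 < t)
    (δ : ℝ) (hδ : δ = t * δ₀ / (‖k‖ - 1))
    (c : ℕ → ℂ) (hc : ∀ n, ‖c (n + 1) - k * c n‖ ≤ δ₀)
    (h0 : ∀ m : ℕ, 1 ≤ m → δ ≤ ‖c 0 - 1 / k ^ m‖) :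
    ∀ n : ℕ, ∀ m : ℕ, 1 ≤ m → δ ≤ ‖c n - 1 / k ^ m‖ := by
  have hk1 : (0:ℝ) < ‖k‖ - 1 := by linarith
  have hkne : k ≠ 0 := by
    intro h; rw [h] at hk; simp at hk; linarith
  have hδpos : 0 < δ := by
    rw [hδ]; positivity
  intro n
  induction n with
  | zero => exact h0
  | succ n ih =>
    intro m hm
    have key : ‖k * c n - 1 / k ^ m‖
        = ‖k‖ * ‖c n - 1 / k ^ (m + 1)‖ := by
      rw [← norm_mul]
      congr 1
      field_simp
      ring
    have h1 := ih (m + 1) (by omega)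
    have htri : ‖k * c n - 1 / k ^ m‖
        ≤ ‖c (n + 1) - 1 / k ^ m‖ + ‖c (n + 1) - k * c n‖ := by
      have := norm_sub_le_norm_sub_add_norm_sub (k * c n) (c (n + 1)) (1 / k ^ m)
      calc ‖k * c n - 1 / k ^ m‖
          ≤ ‖k * c n - c (n + 1)‖ + ‖c (n + 1) - 1 / k ^ m‖ := this
        _ = ‖c (n + 1) - 1 / k ^ m‖ + ‖c (n + 1) - k * c n‖ := by
            rw [norm_sub_rev (k * c n) (c (n + 1))]; ring
    have hstep : δ ≤ ‖k‖ * δ - δ₀ := by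
      have : δ * (‖k‖ - 1) = t * δ₀ := by
        rw [hδ]; field_simp
      nlinarith
    have h2 : ‖k‖ * δ ≤ ‖k * c n - 1 / k ^ m‖ := by
      rw [key]
      exact mul_le_mul_of_nonneg_left h1 (by positivity)
    have h3 := hc n
    linarith
end

section
/- Let k ∈ ℂ with |k| > 1 and δ₀ > 0, and let (c_n)_{n≥0} be a complex sequence with |c_{n+1} − k c_n| ≤ δ₀ for all n. Then for every n ∈ ℕ: (i) |k^n c_0 − c_n| ≤ ((|k|^n − 1)/(|k| − 1)) δ₀; and (ii) if moreover |c_0| ≥ |k|δ₀/(|k| − 1), then |c_n − c_0| ≥ (|k|^n − 1)(|c_0| − δ₀/(|k| − 1)) ≥ (|k|^n − 1) δ₀. -/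
/-- Escaping estimates for approximate orbits of the dilation
`w ↦ kw`, `|k| > 1`: (i) `|kⁿ c₀ - c_n| ≤ ((|k|ⁿ - 1)/(|k| - 1)) δ₀`; (ii) if
`|c₀| ≥ |k|δ₀/(|k| - 1)` then
`|c_n - c₀| ≥ (|k|ⁿ - 1)(|c₀| - δ₀/(|k| - 1)) ≥ (|k|ⁿ - 1)δ₀`. -/
theorem escaping_estimates_for_dilation
    (k : ℂ) (hk : 1 < ‖k‖)
    (δ₀ : ℝ) (hδ₀ : 0 < δ₀)
    (c : ℕ → ℂ) (hc : ∀ n, ‖c (n + 1) - k * c n‖ ≤ δ₀) :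
    ∀ n : ℕ,
      ‖k ^ n * c 0 - c n‖ ≤
        (‖k‖ ^ n - 1) / (‖k‖ - 1) * δ₀ ∧
      (‖k‖ * δ₀ / (‖k‖ - 1) ≤ ‖c 0‖ →
        (‖k‖ ^ n - 1) *
            (‖c 0‖ - δ₀ / (‖k‖ - 1)) ≤
          ‖c n - c 0‖ ∧
        (‖k‖ ^ n - 1) * δ₀ ≤
          (‖k‖ ^ n - 1) *
            (‖c 0‖ - δ₀ / (‖k‖ - 1))) := by
  have hK1 : (0:ℝ) < ‖k‖ - 1 := by linarith
  have main : ∀ m, ‖k ^ m * c 0 - c m‖ ≤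
      (‖k‖ ^ m - 1) / (‖k‖ - 1) * δ₀ := by
    intro m
    induction m with
    | zero => simp
    | succ m ih =>
      have h1 : k ^ (m+1) * c 0 - c (m+1)
          = k * (k ^ m * c 0 - c m) - (c (m+1) - k * c m) := by ring
      have h2 : ‖k ^ (m+1) * c 0 - c (m+1)‖
          ≤ ‖k‖ * ‖k ^ m * c 0 - c m‖
            + ‖c (m+1) - k * c m‖ := by
        rw [h1, ← norm_mul]
        exact norm_sub_le _ _
      have h3 : ‖k‖ * ‖k ^ m * c 0 - c m‖
          ≤ ‖k‖ * ((‖k‖ ^ m - 1) / (‖k‖ - 1) * δ₀) :=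
        mul_le_mul_of_nonneg_left ih (by positivity)
      have h4 := hc m
      have heq : ‖k‖ * ((‖k‖ ^ m - 1) / (‖k‖ - 1) * δ₀) + δ₀
          = (‖k‖ ^ (m+1) - 1) / (‖k‖ - 1) * δ₀ := by
        field_simp
        ring
      linarith
  intro n
  refine ⟨main n, fun h0 => ?_⟩
  have hKn : (1:ℝ) ≤ ‖k‖ ^ n := one_le_pow₀ hk.le
  constructor
  · have h5 : ‖k‖ ^ n - 1 ≤ ‖k ^ n - 1‖ := by
      have := norm_add_le (k ^ n - 1) 1
      simp only [sub_add_cancel, norm_one, norm_pow] at this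
      linarith
    have h6 : (‖k‖ ^ n - 1) * ‖c 0‖
        ≤ ‖(k ^ n - 1) * c 0‖ := by
      rw [norm_mul]
      exact mul_le_mul_of_nonneg_right h5 (norm_nonneg _)
    have h7 : ‖(k ^ n - 1) * c 0‖
        ≤ ‖c n - c 0‖ + ‖k ^ n * c 0 - c n‖ := by
      have he : (k ^ n - 1) * c 0 = (c n - c 0) + (k ^ n * c 0 - c n) := by ring
      rw [he]; exact norm_add_le _ _
    have h8 := main n
    have h9 : δ₀ / (‖k‖ - 1) ≤ ‖c 0‖ - δ₀ := by
      have : ‖k‖ * δ₀ / (‖k‖ - 1)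
          = δ₀ / (‖k‖ - 1) + δ₀ := by field_simp; ring
      linarith [this ▸ h0]
    have hexp : (‖k‖ ^ n - 1) / (‖k‖ - 1) * δ₀
        = (‖k‖ ^ n - 1) * (δ₀ / (‖k‖ - 1)) := by
      field_simp
    nlinarith [mul_le_mul_of_nonneg_left h9 (by linarith : (0:ℝ) ≤ ‖k‖ ^ n - 1)]
  · have h9 : δ₀ ≤ ‖c 0‖ - δ₀ / (‖k‖ - 1) := by
      have hd : δ₀ / (‖k‖ - 1) * (‖k‖ - 1) = δ₀ :=
        div_mul_cancel₀ _ hK1.ne'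
      rw [div_le_iff₀ hK1] at h0
      nlinarith [h0, hd]
    exact mul_le_mul_of_nonneg_left h9 (by linarith)
end

section
/- Let α, β be distinct fixed points of the loxodromic Möbius map g with |cβ + d| < 1 < |cα + d|, let k = 1/(cβ + d)² and h(z) = (z − β)/(z − α). Let δ > 0 satisfy δ|k| < |k − 1|. Then for every z ∈ ℂ with |z + d/c| < (δ|k|²/(2|k − 1|²)) · |α − β|, one has z ≠ α and |h(z) − 1/k| < δ. (That is, the open disk of radius ε₀ = δ|k|²|α − β|/(2|k − 1|²) centered at −d/c is contained in the preimage under h of the disk {w : |w − 1/k| < δ}.) -/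
/-- For `δ > 0` with `δ|k| < |k - 1|`, the open disk of radius
`ε₀ = δ|k|²|α - β|/(2|k - 1|²)` centered at the pole `-d/c` is contained in the
preimage under `h(z) = (z - β)/(z - α)` of the disk `{w : |w - 1/k| < δ}`. -/
theorem disk_around_pole_in_preimage
    (a b c d : ℂ) (hdet : a * d - b * c = 1) (hc : c ≠ 0)
    (hlox : a + d ∉ (Complex.ofReal '' Set.Icc (-2 : ℝ) 2))
    (α β : ℂ) (hαβ : α ≠ β)
    (hfixα : (a * α + b) / (c * α + d) = α)
    (hfixβ : (a * β + b) / (c * β + d) = β)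
    (hα : 1 < ‖c * α + d‖) (hβ : ‖c * β + d‖ < 1)
    (k : ℂ) (hk : k = 1 / (c * β + d) ^ 2)
    (h : ℂ → ℂ) (hh : ∀ z, h z = (z - β) / (z - α))
    (δ : ℝ) (hδ : 0 < δ) (hδk : δ * ‖k‖ < ‖k - 1‖) :
    ∀ z : ℂ,
      ‖z + d / c‖ <
        δ * ‖k‖ ^ 2 / (2 * ‖k - 1‖ ^ 2) *
          ‖α - β‖ →
      z ≠ α ∧ ‖h z - 1 / k‖ < δ := by
  intro z hz
  by_cases hB : c * β + d = 0
  · exfalso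
    have hk0 : k = 0 := by rw [hk, hB]; simp
    have h0 : (0:ℝ) ≤ ‖z + d / c‖ := norm_nonneg _
    rw [hk0] at hz
    norm_num at hz
    linarith
  have hA : c * α + d ≠ 0 := by
    intro h0; rw [h0] at hα; simp at hα; linarith
  have eq1 : a * α + b = α * (c * α + d) := (div_eq_iff hA).mp hfixα
  have eq2 : a * β + b = β * (c * β + d) := (div_eq_iff hB).mp hfixβ
  have hfac : (α - β) * (c * (α + β) + d - a) = 0 := by linear_combination eq2 - eq1
  have hsum : c * (α + β) + d - a = 0 :=
    (mul_eq_zero.mp hfac).resolve_left (sub_ne_zero.mpr hαβ)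
  have hprod : b + c * (α * β) = 0 := by linear_combination eq1 + α * hsum
  have hAB : (c * α + d) * (c * β + d) = 1 := by
    linear_combination hdet + c * hprod + d * hsum
  have hk2 : k = (c * α + d) ^ 2 := by
    rw [hk, eq_comm, eq_div_iff (pow_ne_zero 2 hB)]
    linear_combination ((c * α + d) * (c * β + d) + 1) * hAB
  have hinvk : 1 / k = (c * β + d) ^ 2 := by
    rw [hk2, div_eq_iff (pow_ne_zero 2 hA)]
    linear_combination -((c * α + d) * (c * β + d) + 1) * hAB
  set R := ‖c * α + d‖ with hR
  set C := ‖c‖ with hC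
  set D := ‖α - β‖ with hD
  have hC0 : 0 < C := norm_pos_iff.mpr hc
  have hD0 : 0 < D := norm_pos_iff.mpr (sub_ne_zero.mpr hαβ)
  have hR1 : (1:ℝ) < R := hα
  have hR0 : (0:ℝ) < R := by linarith
  have habsk : ‖k‖ = R ^ 2 := by rw [hk2, norm_pow]
  have hk1 : k - 1 = (c * α + d) * (c * (α - β)) := by
    rw [hk2]; linear_combination hAB
  have habsk1 : ‖k - 1‖ = R * (C * D) := by
    rw [hk1, norm_mul, norm_mul]
  have hpole : α + d / c = (c * α + d) / c := by field_simp
  have habspole : ‖α + d / c‖ = R / C := by rw [hpole, norm_div]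
  rw [habsk, habsk1] at hz hδk
  set E := ‖z + d / c‖ with hE
  have hE0 : 0 ≤ E := norm_nonneg _
  have hrad : δ * (R ^ 2) ^ 2 / (2 * (R * (C * D)) ^ 2) * D = δ * R ^ 2 / (2 * C ^ 2 * D) := by
    field_simp
  rw [hrad] at hz
  have hE1 : E * (2 * C ^ 2 * D) < δ * R ^ 2 :=
    (lt_div_iff₀ (by positivity)).mp hz
  have hE2 : E < R / (2 * C) := by
    rw [lt_div_iff₀ (by positivity)]
    nlinarith [mul_pos hC0 hD0, hE1, hδk]
  have hzα : z ≠ α := by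
    intro hzz
    have hEeq : E = R / C := by rw [hE, hzz, habspole]
    have hhalf : R / C - R / (2 * C) = R / (2 * C) := by ring
    have : 0 < R / (2 * C) := by positivity
    linarith [hE2]
  refine ⟨hzα, ?_⟩
  have hzα' : z - α ≠ 0 := sub_ne_zero.mpr hzα
  have key : ((z - β) - (c * β + d) ^ 2 * (z - α)) * (c * α + d) = (α - β) * (c * z + d) := by
    linear_combination (c * β + d) * (α - z) * hAB
  have hid : h z - 1 / k = ((α - β) * (c * z + d)) / ((z - α) * (c * α + d)) := by
    rw [hh, hinvk, eq_div_iff (mul_ne_zero hzα' hA), ← key]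
    field_simp
  have hczd : c * z + d = c * (z + d / c) := by field_simp
  have habsid : ‖h z - 1 / k‖ = D * (C * E) / (‖z - α‖ * R) := by
    rw [hid, hczd, norm_div, norm_mul, norm_mul, norm_mul]
  rw [habsid]
  have hlow : R / C - E ≤ ‖z - α‖ := by
    have h1 := norm_sub_norm_le ((α : ℂ) + d / c) (z + d / c)
    have h2 : (α + d / c) - (z + d / c) = -(z - α) := by ring
    rw [h2, norm_neg] at h1
    rw [habspole] at h1
    linarith
  have hhalf : R / C - R / (2 * C) = R / (2 * C) := by ring
  have hzαlow : R / (2 * C) < ‖z - α‖ := by linarith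
  have hZmul : R < ‖z - α‖ * (2 * C) := by
    rw [div_lt_iff₀ (by positivity)] at hzαlow; linarith
  have hpos : 0 < ‖z - α‖ * R := by
    have := norm_pos_iff.mpr hzα'
    positivity
  rw [div_lt_iff₀ hpos]
  have s3 := mul_lt_mul_of_pos_left hZmul (show (0:ℝ) < δ * R by positivity)
  have e1 : D * (C * E) * (2 * C) = E * (2 * C ^ 2 * D) := by ring
  have e2 : δ * R * R = δ * R ^ 2 := by ring
  have e3 : δ * R * (‖z - α‖ * (2 * C)) = δ * (‖z - α‖ * R) * (2 * C) := by ring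
  have s4 : D * (C * E) * (2 * C) < δ * (‖z - α‖ * R) * (2 * C) := by linarith [hE1, s3, e1, e2, e3]
  exact lt_of_mul_lt_mul_right s4 (by positivity)
end
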